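/- Let δ : M_n(ℂ) → M_n(ℂ) be a linear map satisfying δ(ab) = δ(a)b + a·δ(b) and δ(a†) = δ(a)† for all a,b ∈ M_n(ℂ), and let ‖δ‖₂ denote its operator norm with respect to the Frobenius norm. Then for every positive semidefinite x ∈ M_n(ℂ) and every z ∈ M_n(ℂ): |tr(δ(x)·z)| ≤ 2·‖δ‖₂·tr(x)·‖z‖_op; equivalently, ‖δ(x)‖₁ ≤ 2·‖δ‖₂·‖x‖₁ for every positive semidefinite x. -/

import Mathlib

open Matrix
open scoped ComplexOrder

attribute [local instance] Matrix.frobeniusNormedAddCommGroup Matrix.frobeniusNormedSpace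

/-- Functional calculus for a matrix: apply `f : ℝ → ℝ` to a Hermitian matrix `A` via its
spectral decomposition (junk value `0` if `A` is not Hermitian). -/
noncomputable def hcfc {n : ℕ} (f : ℝ → ℝ) (A : Matrix (Fin n) (Fin n) ℂ) :
    Matrix (Fin n) (Fin n) ℂ :=
  if hA : A.IsHermitian then
    (hA.eigenvectorUnitary : Matrix (Fin n) (Fin n) ℂ) *
      Matrix.diagonal (fun i => (f (hA.eigenvalues i) : ℂ)) *
      star (hA.eigenvectorUnitary : Matrix (Fin n) (Fin n) ℂ)
  else 0

/-- The trace norm `‖y‖₁ = tr √(y†y)`. -/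
noncomputable def traceNorm {n : ℕ} (y : Matrix (Fin n) (Fin n) ℂ) : ℝ :=
  (Matrix.trace (hcfc Real.sqrt (yᴴ * y))).re

/-- The operator norm of a matrix, acting on the Euclidean space `ℂⁿ`. -/
noncomputable def opNorm {n : ℕ} (h : Matrix (Fin n) (Fin n) ℂ) : ℝ :=
  ‖Matrix.toEuclideanCLM (𝕜 := ℂ) h‖

/-- The operator norm `‖δ‖₂` of a linear endomorphism of `M_n(ℂ)` with respect to the
Frobenius norm. -/
noncomputable def frobOpNorm {n : ℕ}
    (δ : Matrix (Fin n) (Fin n) ℂ →ₗ[ℂ] Matrix (Fin n) (Fin n) ℂ) : ℝ :=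
  (ContinuousLinearMap.hasOpNorm (σ₁₂ := RingHom.id ℂ)).norm (LinearMap.toContinuousLinearMap δ)

section aux
variable {n : ℕ}

lemma frob_norm_sq (M : Matrix (Fin n) (Fin n) ℂ) :
    ‖M‖ ^ 2 = ∑ i, ∑ j, ‖M i j‖ ^ 2 := by
  rw [Matrix.frobenius_norm_def, ← Real.sqrt_eq_rpow, Real.sq_sqrt (by positivity)]
  congr 1; ext i; congr 1; ext j
  rw [← Real.rpow_natCast ‖M i j‖ 2]; norm_num

lemma euclid_norm_sq {m : Type*} [Fintype m] (v : EuclideanSpace ℂ m) :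
    ‖v‖ ^ 2 = ∑ i, ‖v i‖ ^ 2 := by
  rw [EuclideanSpace.norm_eq, Real.sq_sqrt (by positivity)]

lemma abs_trace_mul_le (D M : Matrix (Fin n) (Fin n) ℂ) :
    ‖Matrix.trace (D * M)‖ ≤ ‖D‖ * ‖M‖ := by
  classical
  set a : EuclideanSpace ℂ (Fin n × Fin n) :=
    (WithLp.equiv 2 _).symm (fun p : Fin n × Fin n => Dᴴ p.1 p.2) with ha
  set m : EuclideanSpace ℂ (Fin n × Fin n) :=
    (WithLp.equiv 2 _).symm (fun p : Fin n × Fin n => M p.1 p.2) with hm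
  have hinner : inner ℂ a m = Matrix.trace (D * M) := by
    simp only [PiLp.inner_apply, RCLike.inner_apply, Matrix.trace, Matrix.diag,
      Matrix.mul_apply, ha, hm, WithLp.equiv_symm_apply, PiLp.toLp_apply, Matrix.conjTranspose_apply,
      starRingEnd_apply, star_star]
    rw [Fintype.sum_prod_type, Finset.sum_comm]
    exact Finset.sum_congr rfl fun _ _ => Finset.sum_congr rfl fun _ _ => mul_comm _ _
  have hna : ‖a‖ = ‖D‖ := by
    have : ‖a‖ ^ 2 = ‖D‖ ^ 2 := by
      rw [euclid_norm_sq, frob_norm_sq, Fintype.sum_prod_type, Finset.sum_comm]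
      simp [ha, WithLp.equiv_symm_apply, PiLp.toLp_apply]
    calc ‖a‖ = Real.sqrt (‖a‖ ^ 2) := by rw [Real.sqrt_sq (norm_nonneg _)]
    _ = Real.sqrt (‖D‖ ^ 2) := by rw [this]
    _ = ‖D‖ := Real.sqrt_sq (norm_nonneg _)
  have hnm : ‖m‖ = ‖M‖ := by
    have : ‖m‖ ^ 2 = ‖M‖ ^ 2 := by
      rw [euclid_norm_sq, frob_norm_sq, Fintype.sum_prod_type]
      simp [hm, WithLp.equiv_symm_apply, PiLp.toLp_apply]
    calc ‖m‖ = Real.sqrt (‖m‖ ^ 2) := by rw [Real.sqrt_sq (norm_nonneg _)]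
    _ = Real.sqrt (‖M‖ ^ 2) := by rw [this]
    _ = ‖M‖ := Real.sqrt_sq (norm_nonneg _)
  calc ‖Matrix.trace (D * M)‖ = ‖inner ℂ a m‖ := by
        rw [hinner]
  _ ≤ ‖a‖ * ‖m‖ := norm_inner_le_norm a m
  _ = ‖D‖ * ‖M‖ := by rw [hna, hnm]

end aux

section aux2
variable {n : ℕ}

lemma mul_frob_le (A B : Matrix (Fin n) (Fin n) ℂ) : ‖A * B‖ ≤ opNorm A * ‖B‖ := by
  classical
  have hsq : ‖A * B‖ ^ 2 ≤ (opNorm A * ‖B‖) ^ 2 := by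
    have L : ‖A * B‖ ^ 2 = ∑ j, ∑ i, ‖(A * B) i j‖ ^ 2 := by
      rw [frob_norm_sq]; exact Finset.sum_comm
    have R : (opNorm A * ‖B‖) ^ 2 = ∑ j, opNorm A ^ 2 * ∑ i, ‖B i j‖ ^ 2 := by
      rw [mul_pow, frob_norm_sq, Finset.sum_comm, Finset.mul_sum]
    rw [L, R]
    refine Finset.sum_le_sum fun j _ => ?_
    set c : EuclideanSpace ℂ (Fin n) := (WithLp.equiv 2 _).symm (fun i => B i j) with hc
    have happ : Matrix.toEuclideanCLM (𝕜 := ℂ) A c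
        = (WithLp.equiv 2 _).symm (fun i => (A * B) i j) := by
      rw [hc, WithLp.equiv_symm_apply, Matrix.toEuclideanCLM_toLp]
      refine congrArg _ (funext fun i => ?_)
      simp [Matrix.toLin'_apply, Matrix.mulVec, Matrix.mul_apply, dotProduct]
    have hb : ‖Matrix.toEuclideanCLM (𝕜 := ℂ) A c‖ ≤ opNorm A * ‖c‖ :=
      ContinuousLinearMap.le_opNorm _ _
    have hb2 := pow_le_pow_left₀ (norm_nonneg _) hb 2
    rw [happ, euclid_norm_sq] at hb2
    calc ∑ i, ‖(A * B) i j‖ ^ 2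
        = ∑ i, ‖((WithLp.equiv 2 (Fin n → ℂ)).symm (fun i => (A * B) i j) : EuclideanSpace ℂ (Fin n)) i‖ ^ 2 := rfl
      _ ≤ (opNorm A * ‖c‖) ^ 2 := hb2
      _ = opNorm A ^ 2 * ∑ i, ‖B i j‖ ^ 2 := by
          rw [mul_pow, euclid_norm_sq]; rfl
  have h0 : 0 ≤ opNorm A * ‖B‖ := mul_nonneg (norm_nonneg _) (norm_nonneg _)
  calc ‖A * B‖ = Real.sqrt (‖A * B‖ ^ 2) := (Real.sqrt_sq (norm_nonneg _)).symm
    _ ≤ Real.sqrt ((opNorm A * ‖B‖) ^ 2) := Real.sqrt_le_sqrt hsq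
    _ = opNorm A * ‖B‖ := Real.sqrt_sq h0

set_option synthInstance.maxHeartbeats 1000000 in
set_option maxHeartbeats 2000000 in
lemma opNorm_conjTranspose (A : Matrix (Fin n) (Fin n) ℂ) : opNorm Aᴴ = opNorm A := by
  unfold opNorm
  rw [← Matrix.star_eq_conjTranspose, map_star, ContinuousLinearMap.star_eq_adjoint]
  exact ContinuousLinearMap.adjoint.norm_map _

lemma frob_mul_le (B A : Matrix (Fin n) (Fin n) ℂ) : ‖B * A‖ ≤ ‖B‖ * opNorm A := by
  have h1 : ‖B * A‖ = ‖Aᴴ * Bᴴ‖ := by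
    rw [← Matrix.frobenius_norm_conjTranspose (B * A), Matrix.conjTranspose_mul]
  calc ‖B * A‖ = ‖Aᴴ * Bᴴ‖ := h1
    _ ≤ opNorm Aᴴ * ‖Bᴴ‖ := mul_frob_le _ _
    _ = ‖B‖ * opNorm A := by
        rw [opNorm_conjTranspose, Matrix.frobenius_norm_conjTranspose, mul_comm]

lemma delta_norm_le (δ : Matrix (Fin n) (Fin n) ℂ →ₗ[ℂ] Matrix (Fin n) (Fin n) ℂ)
    (a : Matrix (Fin n) (Fin n) ℂ) : ‖δ a‖ ≤ frobOpNorm δ * ‖a‖ := by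
  exact (LinearMap.toContinuousLinearMap δ).le_opNorm a

lemma trace_conjTranspose_mul_self_re (s : Matrix (Fin n) (Fin n) ℂ) :
    (Matrix.trace (sᴴ * s)).re = ‖s‖ ^ 2 := by
  have h : Matrix.trace (sᴴ * s) = ∑ j, ∑ i, ((‖s i j‖ ^ 2 : ℝ) : ℂ) := by
    simp only [Matrix.trace, Matrix.diag, Matrix.mul_apply, Matrix.conjTranspose_apply]
    refine Finset.sum_congr rfl fun j _ => Finset.sum_congr rfl fun i _ => ?_
    push_cast
    exact RCLike.conj_mul (s i j)
  rw [h, frob_norm_sq, Complex.re_sum, Finset.sum_comm]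
  refine Finset.sum_congr rfl fun i _ => ?_
  rw [Complex.re_sum]
  refine Finset.sum_congr rfl fun j _ => ?_
  exact Complex.ofReal_re _

end aux2

section spec
variable {n : ℕ}
open scoped MatrixOrder

lemma hcfc_of_psd (A : Matrix (Fin n) (Fin n) ℂ) (hA : A.PosSemidef) :
    hcfc Real.sqrt A = CFC.sqrt A := by
  rw [CFC.sqrt_eq_real_sqrt A hA.nonneg, cfcₙ_eq_cfc, hA.1.cfc_eq, hcfc, dif_pos hA.1,
    Matrix.IsHermitian.cfc, Unitary.conjStarAlgAut_apply]
  rfl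

lemma psd_sqrt_posSemidef (A : Matrix (Fin n) (Fin n) ℂ) (hA : A.PosSemidef) :
    (hcfc Real.sqrt A).PosSemidef := by
  rw [hcfc_of_psd A hA]
  exact (CFC.sqrt_nonneg A).posSemidef

lemma psd_sqrt_mul_self (A : Matrix (Fin n) (Fin n) ℂ) (hA : A.PosSemidef) :
    hcfc Real.sqrt A * hcfc Real.sqrt A = A := by
  rw [hcfc_of_psd A hA]
  exact CFC.sqrt_mul_sqrt_self A hA.nonneg

lemma traceNorm_psd (x : Matrix (Fin n) (Fin n) ℂ) (hx : x.PosSemidef) :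
    traceNorm x = (Matrix.trace x).re := by
  have hxx : (xᴴ * x).PosSemidef := Matrix.posSemidef_conjTranspose_mul_self x
  have hsq : x ^ 2 = xᴴ * x := by rw [pow_two, hx.1]
  have hx' : x = CFC.sqrt (xᴴ * x) := by rw [← hsq, CFC.sqrt_sq x hx.nonneg]
  rw [traceNorm, hcfc_of_psd _ hxx, ← hx']

lemma traceNorm_hermitian_le (y : Matrix (Fin n) (Fin n) ℂ) (hy : y.IsHermitian)
    (C : ℝ) (hC : 0 ≤ C)
    (hbound : ∀ z : Matrix (Fin n) (Fin n) ℂ, opNorm z ≤ 1 →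
      ‖Matrix.trace (y * z)‖ ≤ C) :
    traceNorm y ≤ C := by
  classical
  set U : Matrix (Fin n) (Fin n) ℂ := (hy.eigenvectorUnitary : Matrix (Fin n) (Fin n) ℂ)
    with hU_def
  have hUmem : U ∈ Matrix.unitaryGroup (Fin n) ℂ := hy.eigenvectorUnitary.2
  have hU1 : U * star U = 1 := (Matrix.mem_unitaryGroup_iff).mp hUmem
  have hU2 : star U * U = 1 := (Matrix.mem_unitaryGroup_iff').mp hUmem
  set e : Fin n → ℝ := hy.eigenvalues with he_def
  have fuse : ∀ d g : Fin n → ℂ,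
      (U * Matrix.diagonal d * star U) * (U * Matrix.diagonal g * star U)
        = U * Matrix.diagonal (fun i => d i * g i) * star U := by
    intro d g
    calc (U * Matrix.diagonal d * star U) * (U * Matrix.diagonal g * star U)
        = U * (Matrix.diagonal d * ((star U * U) * (Matrix.diagonal g * star U))) := by
          simp only [mul_assoc]
      _ = U * (Matrix.diagonal d * (Matrix.diagonal g * star U)) := by
          rw [hU2, one_mul]
      _ = U * Matrix.diagonal (fun i => d i * g i) * star U := by
          rw [← Matrix.diagonal_mul_diagonal]
          simp only [mul_assoc]
  have trconj : ∀ d : Fin n → ℂ,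
      Matrix.trace (U * Matrix.diagonal d * star U) = ∑ i, d i := by
    intro d
    rw [Matrix.trace_mul_cycle, hU2, one_mul, Matrix.trace_diagonal]
  have hyspec : y = U * Matrix.diagonal (fun i => (e i : ℂ)) * star U := by
    conv_lhs => rw [hy.spectral_theorem, Unitary.conjStarAlgAut_apply]
    rfl
  set sg : Fin n → ℝ := fun i => if e i < 0 then -1 else 1 with hsg_def
  set z : Matrix (Fin n) (Fin n) ℂ := U * Matrix.diagonal (fun i => (sg i : ℂ)) * star U
    with hz_def
  set B : Matrix (Fin n) (Fin n) ℂ := U * Matrix.diagonal (fun i => ((|e i| : ℝ) : ℂ)) * star U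
    with hB_def
  have hBpsd : B.PosSemidef := by
    have hd : (Matrix.diagonal (fun i => ((|e i| : ℝ) : ℂ))).PosSemidef :=
      Matrix.posSemidef_diagonal_iff.mpr fun i => by
        exact_mod_cast Complex.zero_le_real.mpr (abs_nonneg (e i))
    have h2 := hd.mul_mul_conjTranspose_same U
    rwa [← Matrix.star_eq_conjTranspose, ← hB_def] at h2
  have hyy : (yᴴ * y).PosSemidef := Matrix.posSemidef_conjTranspose_mul_self y
  have hB2 : B ^ 2 = yᴴ * y := by
    have habs : (fun i => ((|e i| : ℝ) : ℂ) * ((|e i| : ℝ) : ℂ)) = fun i => (e i : ℂ) * (e i : ℂ) := by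
      funext i
      exact_mod_cast congrArg (Complex.ofReal) (abs_mul_abs_self (e i))
    rw [pow_two, hB_def, fuse, habs, hy.eq, hyspec, fuse]
  have hsqrtB : hcfc Real.sqrt (yᴴ * y) = B := by
    rw [hcfc_of_psd _ hyy]
    rw [← hB2, CFC.sqrt_sq B hBpsd.nonneg]
  have htn : traceNorm y = ∑ i, |e i| := by
    rw [traceNorm, hsqrtB, hB_def, trconj, ← Complex.ofReal_sum]
    exact Complex.ofReal_re _
  have hzstar : star z * z = 1 := by
    have hstarz : star z = U * Matrix.diagonal (fun i => (sg i : ℂ)) * star U := by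
      rw [hz_def]
      calc star (U * Matrix.diagonal (fun i => (sg i : ℂ)) * star U)
          = U * (star (Matrix.diagonal fun i => (sg i : ℂ)) * star U) := by
            simp only [StarMul.star_mul, star_star, mul_assoc]
        _ = U * Matrix.diagonal (fun i => (sg i : ℂ)) * star U := by
            rw [← mul_assoc]
            congr 2
            rw [Matrix.star_eq_conjTranspose, Matrix.diagonal_conjTranspose]
            refine congrArg Matrix.diagonal ?_
            funext i
            rw [Pi.star_apply, Complex.star_def]
            exact Complex.conj_ofReal (sg i)
    rw [hstarz, hz_def, fuse]
    have hone : (fun i => (sg i : ℂ) * (sg i : ℂ)) = fun _ => (1 : ℂ) := by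
      funext i
      have h1 : sg i * sg i = 1 := by
        rw [hsg_def]
        by_cases h : e i < 0 <;> simp [h]
      exact_mod_cast congrArg (Complex.ofReal) h1
    rw [hone, Matrix.diagonal_one, mul_one, hU1]
  have hzop : opNorm z ≤ 1 := by
    have hmap : star (Matrix.toEuclideanCLM (𝕜 := ℂ) z) * Matrix.toEuclideanCLM (𝕜 := ℂ) z = 1 := by
      rw [← map_star, ← _root_.map_mul, hzstar, _root_.map_one]
    have hsq : opNorm z * opNorm z
        = ‖(1 : EuclideanSpace ℂ (Fin n) →L[ℂ] EuclideanSpace ℂ (Fin n))‖ := by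
      unfold opNorm
      rw [← CStarRing.norm_star_mul_self, hmap]
    have hone : ‖(1 : EuclideanSpace ℂ (Fin n) →L[ℂ] EuclideanSpace ℂ (Fin n))‖ ≤ 1 := by
      rw [ContinuousLinearMap.one_def]
      exact ContinuousLinearMap.norm_id_le
    nlinarith [norm_nonneg (Matrix.toEuclideanCLM (𝕜 := ℂ) z)]
  have hyz : Matrix.trace (y * z) = ((∑ i, |e i| : ℝ) : ℂ) := by
    rw [hyspec, hz_def, fuse, trconj]
    have : ∀ i, (e i : ℂ) * (sg i : ℂ) = ((|e i| : ℝ) : ℂ) := by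
      intro i
      have h1 : e i * sg i = |e i| := by
        rw [hsg_def]
        by_cases h : e i < 0
        · simp [h, abs_of_neg h]
        · simp [h, abs_of_nonneg (le_of_not_gt h)]
      exact_mod_cast congrArg (Complex.ofReal) h1
    simp_rw [this]
    norm_cast
  have hfinal := hbound z hzop
  rw [hyz, Complex.norm_real, Real.norm_eq_abs,
    abs_of_nonneg (Finset.sum_nonneg fun i _ => abs_nonneg (e i))] at hfinal
  rw [htn]
  exact hfinal

end spec

/-- For a symmetric derivation `δ` on `M_n(ℂ)` and positive semidefinite `x`:
`|tr(δ(x)·z)| ≤ 2‖δ‖₂ tr(x) ‖z‖_op` for every `z`, and `‖δ(x)‖₁ ≤ 2‖δ‖₂‖x‖₁`. -/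
theorem derivation_traceNorm_bound {n : ℕ}
    (δ : Matrix (Fin n) (Fin n) ℂ →ₗ[ℂ] Matrix (Fin n) (Fin n) ℂ)
    (hLeib : ∀ a b : Matrix (Fin n) (Fin n) ℂ, δ (a * b) = δ a * b + a * δ b)
    (hSym : ∀ a : Matrix (Fin n) (Fin n) ℂ, δ (star a) = star (δ a)) :
    ∀ x : Matrix (Fin n) (Fin n) ℂ, x.PosSemidef →
      (∀ z : Matrix (Fin n) (Fin n) ℂ,
        ‖Matrix.trace (δ x * z)‖ ≤
          2 * frobOpNorm δ * (Matrix.trace x).re * opNorm z) ∧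
      traceNorm (δ x) ≤ 2 * frobOpNorm δ * traceNorm x := by
  intro x hx
  have hF0 : 0 ≤ frobOpNorm δ := ContinuousLinearMap.opNorm_nonneg _
  set s := hcfc Real.sqrt x with hs_def
  have hs : s.PosSemidef := psd_sqrt_posSemidef x hx
  have hss : s * s = x := psd_sqrt_mul_self x hx
  have hnormsq : ‖s‖ ^ 2 = (Matrix.trace x).re := by
    rw [← trace_conjTranspose_mul_self_re s, hs.1, hss]
  have htr0 : 0 ≤ (Matrix.trace x).re := by rw [← hnormsq]; positivity
  have hd : δ x = δ s * s + s * δ s := by rw [← hss, hLeib]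
  have key : ∀ z : Matrix (Fin n) (Fin n) ℂ,
      ‖Matrix.trace (δ x * z)‖ ≤
        2 * frobOpNorm δ * (Matrix.trace x).re * opNorm z := by
    intro z
    have h1 : Matrix.trace (δ x * z)
        = Matrix.trace (δ s * (s * z)) + Matrix.trace (δ s * (z * s)) := by
      rw [hd, add_mul, Matrix.trace_add, mul_assoc]
      congr 1
      rw [Matrix.trace_mul_cycle, Matrix.trace_mul_comm]
    have hds : ‖δ s‖ ≤ frobOpNorm δ * ‖s‖ := delta_norm_le δ s
    have hnn1 : (0:ℝ) ≤ frobOpNorm δ * ‖s‖ := mul_nonneg hF0 (norm_nonneg _)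
    have h2 : ‖Matrix.trace (δ s * (s * z))‖
        ≤ (frobOpNorm δ * ‖s‖) * (‖s‖ * opNorm z) :=
      (abs_trace_mul_le _ _).trans
        (mul_le_mul hds (frob_mul_le s z) (norm_nonneg _) hnn1)
    have h3 : ‖Matrix.trace (δ s * (z * s))‖
        ≤ (frobOpNorm δ * ‖s‖) * (opNorm z * ‖s‖) :=
      (abs_trace_mul_le _ _).trans
        (mul_le_mul hds (mul_frob_le z s) (norm_nonneg _) hnn1)
    calc ‖Matrix.trace (δ x * z)‖
        = ‖Matrix.trace (δ s * (s * z)) + Matrix.trace (δ s * (z * s))‖ := by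
          rw [h1]
      _ ≤ ‖Matrix.trace (δ s * (s * z))‖
            + ‖Matrix.trace (δ s * (z * s))‖ := norm_add_le _ _
      _ ≤ (frobOpNorm δ * ‖s‖) * (‖s‖ * opNorm z)
            + (frobOpNorm δ * ‖s‖) * (opNorm z * ‖s‖) := add_le_add h2 h3
      _ = 2 * frobOpNorm δ * (‖s‖ ^ 2) * opNorm z := by ring
      _ = 2 * frobOpNorm δ * (Matrix.trace x).re * opNorm z := by rw [hnormsq]
  refine ⟨key, ?_⟩
  have hherm : (δ x).IsHermitian := by
    have h1 := hSym x
    have h2 : star x = x := hx.1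
    rw [h2] at h1
    rw [Matrix.IsHermitian, ← Matrix.star_eq_conjTranspose, ← h1]
  have hC : 0 ≤ 2 * frobOpNorm δ * (Matrix.trace x).re := by positivity
  have hmain := traceNorm_hermitian_le (δ x) hherm _ hC (fun z hz => by
    calc ‖Matrix.trace (δ x * z)‖
        ≤ 2 * frobOpNorm δ * (Matrix.trace x).re * opNorm z := key z
      _ ≤ 2 * frobOpNorm δ * (Matrix.trace x).re := mul_le_of_le_one_right hC hz)
  rw [traceNorm_psd x hx]
  exact hmain
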